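/- Let B be a block and let G be obtained from B by attaching whiskers to the vertices v_1, ..., v_k of B, with k < n = |V(B)|. If G is combinatorially unmixed, then for every subset S ⊆ {v_1, ..., v_k}, the induced subgraph B \ S is connected. -/

import Mathlib

open SimpleGraph Finset

variable {V : Type*}

/-- Number of connected components of the induced subgraph on the complement of `S`. -/
noncomputable def ncomp (G : SimpleGraph V) (S : Finset V) : ℕ :=
  Nat.card ((G.induce {v | v ∉ S}).ConnectedComponent)

/-- `S` is a cut set of `G`. -/
def cutSet [DecidableEq V] (G : SimpleGraph V) (S : Finset V) : Prop :=
  S = ∅ ∨ ∀ i ∈ S, ncomp G (S.erase i) < ncomp G S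

/-- `G` is combinatorially unmixed. -/
def unmixed [DecidableEq V] (G : SimpleGraph V) : Prop :=
  G.Connected ∧ ∀ S : Finset V, cutSet G S → ncomp G S = S.card + 1

/-- `G` is accessible. -/
def accessible [DecidableEq V] (G : SimpleGraph V) : Prop :=
  unmixed G ∧ ∀ S : Finset V, cutSet G S → S ≠ ∅ → ∃ s ∈ S, cutSet G (S.erase s)

/-- A block: connected with no cut vertices. -/
def isBlock [DecidableEq V] (G : SimpleGraph V) : Prop :=
  G.Connected ∧ ∀ v : V, ¬ cutSet G {v}

/-- The graph obtained from `B` by attaching a whisker (pendant leaf) at each `f i`. -/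
def whisker {k : ℕ} (B : SimpleGraph V) (f : Fin k → V) : SimpleGraph (V ⊕ Fin k) :=
  SimpleGraph.fromRel (fun x y => match x, y with
    | Sum.inl a, Sum.inl b => B.Adj a b
    | Sum.inl a, Sum.inr i => a = f i
    | _, _ => False)

/-- A free vertex: a vertex contained in a unique maximal clique. -/
def freeVertex (G : SimpleGraph V) (v : V) : Prop :=
  ∃! s : Set V, v ∈ s ∧ G.IsClique s ∧ ∀ t, G.IsClique t → s ⊆ t → s = t

/-! ### Auxiliary lemmas -/

/-- Lift a function constant on edges to connected components. -/
lemma walk_const {W : Type*} {G : SimpleGraph W} {β : Sort*} {φ : W → β}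
    (h : ∀ v w, G.Adj v w → φ v = φ w) {v w : W} (p : G.Walk v w) : φ v = φ w := by
  induction p with
  | nil => rfl
  | cons ha _ ih => exact (h _ _ ha).trans ih

def liftAdj {W : Type*} (G : SimpleGraph W) {β : Sort*} (φ : W → β)
    (h : ∀ v w, G.Adj v w → φ v = φ w) : G.ConnectedComponent → β :=
  ConnectedComponent.lift φ (fun _ _ p _ => walk_const h p)

@[simp] lemma liftAdj_mk {W : Type*} (G : SimpleGraph W) {β : Sort*} (φ : W → β)
    (h : ∀ v w, G.Adj v w → φ v = φ w) (v : W) :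
    liftAdj G φ h (G.connectedComponentMk v) = φ v := rfl

lemma card_components_of_connected {W : Type*} [Finite W] (G : SimpleGraph W)
    (h : G.Connected) : Nat.card G.ConnectedComponent = 1 := by
  have hn : Nonempty G.ConnectedComponent := ⟨G.connectedComponentMk h.nonempty.some⟩
  have hs : Subsingleton G.ConnectedComponent := by
    constructor
    intro a b
    refine ConnectedComponent.ind₂ (fun u v => ?_) a b
    exact ConnectedComponent.eq.mpr (h.preconnected u v)
  exact Nat.card_unique

lemma two_le_card_components {W : Type*} [Finite W] (G : SimpleGraph W)
    (hne : Nonempty W) (h : ¬ G.Connected) : 2 ≤ Nat.card G.ConnectedComponent := by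
  rw [SimpleGraph.connected_iff] at h
  push_neg at h
  obtain ⟨u, v, huv⟩ : ∃ u v, ¬ G.Reachable u v := by
    by_contra hc; push_neg at hc; exact (not_isEmpty_of_nonempty W) (h (fun u v => hc u v))
  have h1 : G.connectedComponentMk u ≠ G.connectedComponentMk v :=
    fun he => huv (ConnectedComponent.eq.mp he)
  have : Nontrivial G.ConnectedComponent := ⟨_, _, h1⟩
  exact Finite.one_lt_card_iff_nontrivial.mpr this

section Whisker

variable [DecidableEq V] {k : ℕ} (B : SimpleGraph V) (f : Fin k → V) (S : Finset V)

private lemma whisker_adj_ll {a b : V} : (whisker B f).Adj (Sum.inl a) (Sum.inl b) ↔ B.Adj a b := by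
  simp only [whisker, fromRel_adj]
  constructor
  · rintro ⟨-, h | h⟩
    · exact h
    · exact h.symm
  · intro h
    exact ⟨by simpa using h.ne, Or.inl h⟩

private lemma whisker_adj_lr {a : V} {i : Fin k} :
    (whisker B f).Adj (Sum.inl a) (Sum.inr i) ↔ a = f i := by
  simp only [whisker, fromRel_adj]
  constructor
  · rintro ⟨-, h | h⟩
    · exact h
    · exact h.elim
  · intro h
    exact ⟨by simp, Or.inl h⟩

private lemma whisker_adj_rr {i j : Fin k} : ¬ (whisker B f).Adj (Sum.inr i) (Sum.inr j) := by
  simp only [whisker, fromRel_adj]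
  rintro ⟨-, h | h⟩ <;> exact h

/-- forward map on vertices -/
noncomputable def fwdFun :
    {x : V ⊕ Fin k // x ∈ {y : V ⊕ Fin k | y ∉ (S.image Sum.inl : Finset (V ⊕ Fin k))}} →
    ((B.induce {v | v ∉ S}).ConnectedComponent ⊕ {i : Fin k // f i ∈ S})
  | ⟨Sum.inl v, hv⟩ => Sum.inl ((B.induce {v | v ∉ S}).connectedComponentMk
      ⟨v, by simpa using hv⟩)
  | ⟨Sum.inr i, _⟩ =>
      if h : f i ∈ S then Sum.inr ⟨i, h⟩
      else Sum.inl ((B.induce {v | v ∉ S}).connectedComponentMk ⟨f i, h⟩)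

lemma fwdFun_adj : ∀ a b, ((whisker B f).induce
    {y : V ⊕ Fin k | y ∉ (S.image Sum.inl : Finset (V ⊕ Fin k))}).Adj a b →
    fwdFun B f S a = fwdFun B f S b := by
  rintro ⟨x, hx⟩ ⟨y, hy⟩ hadj
  have hadj' : (whisker B f).Adj x y := hadj
  match x, y with
  | Sum.inl a, Sum.inl b =>
    have hab : B.Adj a b := (whisker_adj_ll B f).mp hadj'
    simp only [fwdFun]
    congr 1
    apply ConnectedComponent.eq.mpr
    exact Adj.reachable (by exact hab : (B.induce {v | v ∉ S}).Adj ⟨a, by simpa using hx⟩ ⟨b, by simpa using hy⟩)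
  | Sum.inl a, Sum.inr i =>
    have hai : a = f i := (whisker_adj_lr B f).mp hadj'
    have hfi : f i ∉ S := by subst hai; simpa using hx
    simp only [fwdFun, dif_neg hfi]
    congr 1
    subst hai
    rfl
  | Sum.inr i, Sum.inl a =>
    have hai : a = f i := (whisker_adj_lr B f).mp hadj'.symm
    have hfi : f i ∉ S := by subst hai; simpa using hy
    simp only [fwdFun, dif_neg hfi]
    congr 1
    subst hai
    rfl
  | Sum.inr i, Sum.inr j => exact absurd hadj' (whisker_adj_rr B f)

/-- backward map -/
noncomputable def bwdFun :
    ((B.induce {v | v ∉ S}).ConnectedComponent ⊕ {i : Fin k // f i ∈ S}) →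
    ((whisker B f).induce
      {y : V ⊕ Fin k | y ∉ (S.image Sum.inl : Finset (V ⊕ Fin k))}).ConnectedComponent
  | Sum.inl c => liftAdj _ (fun v => SimpleGraph.connectedComponentMk _
      ⟨Sum.inl v.1, by
        simp only [Set.mem_setOf_eq]
        intro hmem
        obtain ⟨a, ha, hae⟩ := Finset.mem_image.mp hmem
        exact v.2 ((Sum.inl_injective hae) ▸ ha)⟩)
      (by
        intro v w hvw
        apply ConnectedComponent.eq.mpr
        refine Adj.reachable ?_
        show (whisker B f).Adj (Sum.inl v.1) (Sum.inl w.1)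
        exact (whisker_adj_ll B f).mpr hvw) c
  | Sum.inr i => SimpleGraph.connectedComponentMk _ ⟨Sum.inr i.1, by simp⟩

noncomputable def compEquiv :
    ((whisker B f).induce
      {y : V ⊕ Fin k | y ∉ (S.image Sum.inl : Finset (V ⊕ Fin k))}).ConnectedComponent ≃
    ((B.induce {v | v ∉ S}).ConnectedComponent ⊕ {i : Fin k // f i ∈ S}) where
  toFun := liftAdj _ (fwdFun B f S) (fwdFun_adj B f S)
  invFun := bwdFun B f S
  left_inv := by
    refine ConnectedComponent.ind ?_
    rintro ⟨x, hx⟩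
    match x with
    | Sum.inl v => rfl
    | Sum.inr i =>
      by_cases h : f i ∈ S
      · simp only [liftAdj_mk, fwdFun, dif_pos h, bwdFun]
      · simp only [liftAdj_mk, fwdFun, dif_neg h, bwdFun]
        apply ConnectedComponent.eq.mpr
        refine Adj.reachable ?_
        show (whisker B f).Adj (Sum.inl (f i)) (Sum.inr i)
        exact (whisker_adj_lr B f).mpr rfl
  right_inv := by
    rintro (c | ⟨i, h⟩)
    · refine ConnectedComponent.ind (fun v => ?_) c
      simp only [bwdFun, liftAdj_mk, fwdFun]
    · simp only [bwdFun, liftAdj_mk, fwdFun, dif_pos h]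

lemma ncomp_whisker (hf : Function.Injective f) (hS : ↑S ⊆ Set.range f) [Fintype V] :
    ncomp (whisker B f) (S.image Sum.inl) =
      Nat.card ((B.induce {v | v ∉ S}).ConnectedComponent) + S.card := by
  rw [ncomp, Nat.card_congr (compEquiv B f S), Nat.card_sum]
  congr 1
  have e : {i : Fin k // f i ∈ S} ≃ {v : V // v ∈ S} := by
    refine Equiv.ofBijective (fun i => ⟨f i.1, i.2⟩) ⟨?_, ?_⟩
    · rintro ⟨i, hi⟩ ⟨j, hj⟩ hij
      simpa using hf (by simpa using hij)
    · rintro ⟨v, hv⟩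
      obtain ⟨i, rfl⟩ := hS hv
      exact ⟨⟨i, hv⟩, rfl⟩
  rw [Nat.card_congr e]
  exact Nat.card_eq_finsetCard S

end Whisker

theorem whisker_unmixed_remove_whiskered_connected [Fintype V] [DecidableEq V] {k : ℕ}
    (B : SimpleGraph V) (hB : isBlock B) (f : Fin k → V) (hf : Function.Injective f)
    (hk : k < Fintype.card V) (hu : unmixed (whisker B f)) :
    ∀ S : Finset V, ↑S ⊆ Set.range f → (B.induce {v | v ∉ S}).Connected := by
  intro S
  induction S using Finset.strongInductionOn with
  | _ S ih =>
  intro hS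
  by_cases hSe : S = ∅
  · subst hSe
    have hs : {v : V | v ∉ (∅ : Finset V)} = Set.univ := by simp
    rw [hs]
    exact (induceUnivIso B).connected_iff.mpr hB.1
  · by_contra hcon
    -- S is nonempty
    have hSne : S.Nonempty := Finset.nonempty_iff_ne_empty.mpr hSe
    -- card bound
    have hcard : S.card ≤ k := by
      have : S ⊆ Finset.univ.image f := by
        intro v hv
        obtain ⟨i, rfl⟩ := hS hv
        exact Finset.mem_image.mpr ⟨i, Finset.mem_univ i, rfl⟩
      calc S.card ≤ (Finset.univ.image f).card := Finset.card_le_card this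
        _ ≤ (Finset.univ : Finset (Fin k)).card := Finset.card_image_le
        _ = k := by simp
    -- the vertex set of B \ S is nonempty
    have hnev : Nonempty {v : V | v ∉ S} := by
      have : Sᶜ.Nonempty := by
        rw [← Finset.card_pos, Finset.card_compl]
        omega
      obtain ⟨v, hv⟩ := this
      exact ⟨⟨v, by simpa using hv⟩⟩
    -- number of components at least 2
    have h2 : 2 ≤ Nat.card ((B.induce {v | v ∉ S}).ConnectedComponent) :=
      two_le_card_components _ hnev hcon
    -- cut set
    have hcut : cutSet (whisker B f) (S.image Sum.inl) := by
      right
      intro x hx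
      obtain ⟨i, hi, rfl⟩ := Finset.mem_image.mp hx
      have herase : (S.image Sum.inl : Finset (V ⊕ Fin k)).erase (Sum.inl i)
          = (S.erase i).image Sum.inl := by
        ext y
        simp only [Finset.mem_erase, Finset.mem_image]
        constructor
        · rintro ⟨hne, v, hv, rfl⟩
          exact ⟨v, ⟨fun h => hne (by rw [h]), hv⟩, rfl⟩
        · rintro ⟨v, ⟨hne, hv⟩, rfl⟩
          exact ⟨fun h => hne (Sum.inl_injective h), v, hv, rfl⟩
      rw [herase]
      have hconn : (B.induce {v | v ∉ S.erase i}).Connected := by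
        apply ih (S.erase i) (Finset.erase_ssubset hi)
        exact Set.Subset.trans (by exact_mod_cast Finset.coe_subset.mpr (Finset.erase_subset i S)) hS
      rw [ncomp_whisker B f (S.erase i) hf
        (Set.Subset.trans (by exact_mod_cast Finset.coe_subset.mpr (Finset.erase_subset i S)) hS),
        ncomp_whisker B f S hf hS,
        card_components_of_connected _ hconn]
      have := Finset.card_erase_add_one hi
      omega
    have := hu.2 (S.image Sum.inl) hcut
    rw [ncomp_whisker B f S hf hS, Finset.card_image_of_injective S Sum.inl_injective] at this
    omega
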